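/- Let A be an n-by-n reciprocal matrix with n > 2, and let w be a positive n-vector. If there exist i, j ∈ {1,…,n} with i ≠ j such that w(i) is efficient for A(i) and w(j) is efficient for A(j), then w is efficient for A. -/

import Mathlib

def PosVec {ι : Type*} (w : ι → ℝ) : Prop := ∀ i, 0 < w i

def IsReciprocal {ι : Type*} (A : Matrix ι ι ℝ) : Prop :=
  (∀ i j, 0 < A i j) ∧ ∀ i j, A j i = 1 / A i j

def IsEfficient {ι : Type*} (A : Matrix ι ι ℝ) (w : ι → ℝ) : Prop :=
  PosVec w ∧ ∀ v : ι → ℝ, PosVec v →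
    (∀ i j, |A i j - v i / v j| ≤ |A i j - w i / w j|) →
    ∃ c : ℝ, 0 < c ∧ v = c • w

/-- The principal submatrix `A(k)` of `A` obtained by deleting row and column `k`. -/
def delMat {n : ℕ} (A : Matrix (Fin n) (Fin n) ℝ) (k : Fin n) :
    Matrix {i : Fin n // i ≠ k} {i : Fin n // i ≠ k} ℝ :=
  Matrix.of fun a b => A a.1 b.1

/-- The vector `w(k)` obtained from `w` by deleting the `k`-th entry. -/
def delVec {n : ℕ} (w : Fin n → ℝ) (k : Fin n) : {i : Fin n // i ≠ k} → ℝ :=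
  fun a => w a.1

/-- `E(A)`, the set of efficient vectors for `A`. -/
def Eset {ι : Type*} (A : Matrix ι ι ℝ) : Set (ι → ℝ) := {w | IsEfficient A w}

/-- `E(A; i)`, the set of efficient vectors `w` for `A` such that `w(i)` is efficient
for `A(i)`. -/
def EsetSub {n : ℕ} (A : Matrix (Fin n) (Fin n) ℝ) (i : Fin n) : Set (Fin n → ℝ) :=
  {w | IsEfficient A w ∧ IsEfficient (delMat A i) (delVec w i)}

/-- for `n > 2`, if `w(i)` is efficient for `A(i)` and `w(j)` is efficient for
`A(j)` for two distinct indices `i ≠ j`, then `w` is efficient for `A`. -/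
theorem efficient_of_two_efficient_deletions {n : ℕ} (hn : 2 < n)
    (A : Matrix (Fin n) (Fin n) ℝ) (hA : IsReciprocal A) (w : Fin n → ℝ) (hw : PosVec w)
    (i j : Fin n) (hij : i ≠ j)
    (hi : IsEfficient (delMat A i) (delVec w i))
    (hj : IsEfficient (delMat A j) (delVec w j)) :
    IsEfficient A w := by
  refine ⟨hw, fun v hv hineq => ?_⟩
  obtain ⟨c, hc, hci⟩ := hi.2 (delVec v i) (fun a => hv a.1) (fun a b => hineq a.1 b.1)
  obtain ⟨d, hd, hdj⟩ := hj.2 (delVec v j) (fun a => hv a.1) (fun a b => hineq a.1 b.1)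
  obtain ⟨k, hki, hkj⟩ : ∃ k : Fin n, k ≠ i ∧ k ≠ j := by
    by_contra h
    push_neg at h
    have hsub : (Finset.univ : Finset (Fin n)) ⊆ {i, j} := fun k _ => by
      by_cases hki : k = i
      · simp [hki]
      · simp [h k hki]
    have hle := Finset.card_le_card hsub
    have h2 : ({i, j} : Finset (Fin n)).card ≤ 2 :=
      le_trans (Finset.card_insert_le _ _) (by simp)
    simp only [Finset.card_univ, Fintype.card_fin] at hle
    omega
  have hck : v k = c * w k := congrFun hci ⟨k, hki⟩
  have hdk : v k = d * w k := congrFun hdj ⟨k, hkj⟩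
  have hcd : c = d := by
    have := hck.symm.trans hdk
    have hwk := hw k
    exact mul_right_cancel₀ (ne_of_gt hwk) this
  refine ⟨c, hc, funext fun m => ?_⟩
  by_cases hmi : m = i
  · subst hmi
    have := congrFun hdj ⟨m, hij⟩
    simpa [hcd, delVec] using this
  · exact congrFun hci ⟨m, hmi⟩
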